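/- For the heterogeneity estimate Ĥ(D^(k)) = H(softmax(Δb^(k), T)) with expected update E[Δb_i^(k)] = ηR(D_i^(k) S − E_i), the expected estimate difference between clients u and k satisfies E[Ĥ(D^(u)) − Ĥ(D^(k))] ≥ (1/2)((ηR S)/(C T))²·‖D^(k) − U‖₂² − (ηR ln C / T)·‖D^(u) − U‖_∞ − 𝒞δ, where 𝒞 = ηR(ηR + C²T ln C)/(C²T²) and δ = max_i |S/C − E_i|, under the first-order softmax approximation exp(x) ≈ 1 + x for the arguments ηR(D_i S − E_i)/T. -/

import Mathlib

open Real Finset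

lemma my_one_sub_inv_le_log {x : ℝ} (hx : 0 < x) : 1 - 1/x ≤ Real.log x := by
  have h := Real.log_le_sub_one_of_pos (show (0:ℝ) < x⁻¹ by positivity)
  rw [Real.log_inv] at h
  rw [one_div]
  linarith

lemma pt_lower_left {t : ℝ} (ht0 : 0 ≤ t) (ht1 : t ≤ 1) :
    (t-1)^2/2 ≤ t * Real.log t - t + 1 := by
  set g : ℝ → ℝ := fun s => s * Real.log s - s + 1 - (s-1)^2/2 with hg
  have hcont : Continuous g := by
    apply Continuous.sub
    · exact (Real.continuous_mul_log.sub continuous_id).add continuous_const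
    · exact ((continuous_id.sub continuous_const).pow 2).div_const 2
  have hd : ∀ x ∈ Set.Ioo (0:ℝ) 1, HasDerivAt g (Real.log x - x + 1) x := by
    intro x hx
    have h1 : HasDerivAt (fun s : ℝ => s * Real.log s) (Real.log x + 1) x :=
      Real.hasDerivAt_mul_log (ne_of_gt hx.1)
    have h2 : HasDerivAt (fun s : ℝ => (s-1)^2/2) ((2 * (x-1)^1 * 1)/2) x :=
      (((hasDerivAt_id x).sub_const 1).pow 2).div_const 2
    have h3 : HasDerivAt (fun s : ℝ => s * Real.log s - s + 1 - (s-1)^2/2)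
        (Real.log x + 1 - 1 - (2 * (x-1)^1 * 1)/2) x :=
      (((h1.sub (hasDerivAt_id x)).add_const 1).sub h2)
    convert h3 using 1
    ring
  have hmono : AntitoneOn g (Set.Icc (0:ℝ) 1) := by
    apply antitoneOn_of_deriv_nonpos (convex_Icc 0 1) hcont.continuousOn
    · intro x hx
      rw [interior_Icc] at hx
      exact (hd x hx).differentiableAt.differentiableWithinAt
    · intro x hx
      rw [interior_Icc] at hx
      rw [(hd x hx).deriv]
      have := Real.log_le_sub_one_of_pos hx.1
      linarith
  have hle := hmono (Set.mem_Icc.mpr ⟨ht0, ht1⟩) (Set.mem_Icc.mpr ⟨zero_le_one, le_refl 1⟩) ht1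
  have hg1 : g 1 = 0 := by simp [hg]
  have hgt : g t = t * Real.log t - t + 1 - (t-1)^2/2 := rfl
  rw [hg1] at hle
  rw [hgt] at hle
  linarith

lemma pt_lower_right {B t : ℝ} (hB : 2 ≤ B) (ht1 : 1 ≤ t) (htB : t ≤ B) :
    (t-1)^2/(2*B) ≤ t * Real.log t - t + 1 := by
  have hB0 : (0:ℝ) < B := by linarith
  set g : ℝ → ℝ := fun s => s * Real.log s - s + 1 - (s-1)^2/(2*B) with hg
  have hcont : Continuous g := by
    apply Continuous.sub
    · exact (Real.continuous_mul_log.sub continuous_id).add continuous_const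
    · exact ((continuous_id.sub continuous_const).pow 2).div_const (2*B)
  have hd : ∀ x ∈ Set.Ioo (1:ℝ) B, HasDerivAt g (Real.log x - (x-1)/B) x := by
    intro x hx
    have hx0 : (0:ℝ) < x := lt_trans one_pos hx.1
    have h1 : HasDerivAt (fun s : ℝ => s * Real.log s) (Real.log x + 1) x :=
      Real.hasDerivAt_mul_log (ne_of_gt hx0)
    have h2 : HasDerivAt (fun s : ℝ => (s-1)^2/(2*B)) ((2 * (x-1)^1 * 1)/(2*B)) x :=
      (((hasDerivAt_id x).sub_const 1).pow 2).div_const (2*B)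
    have h3 : HasDerivAt (fun s : ℝ => s * Real.log s - s + 1 - (s-1)^2/(2*B))
        (Real.log x + 1 - 1 - (2 * (x-1)^1 * 1)/(2*B)) x :=
      (((h1.sub (hasDerivAt_id x)).add_const 1).sub h2)
    convert h3 using 1
    field_simp
    ring
  have hmono : MonotoneOn g (Set.Icc (1:ℝ) B) := by
    apply monotoneOn_of_deriv_nonneg (convex_Icc 1 B) hcont.continuousOn
    · intro x hx
      rw [interior_Icc] at hx
      exact (hd x hx).differentiableAt.differentiableWithinAt
    · intro x hx
      rw [interior_Icc] at hx
      rw [(hd x hx).deriv]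
      have hx0 : (0:ℝ) < x := lt_trans one_pos hx.1
      have hlog := my_one_sub_inv_le_log hx0
      have h4 : (x-1)/B ≤ (x-1)/x := by
        apply div_le_div_of_nonneg_left (by linarith [hx.1]) hx0 (le_of_lt hx.2)
      have h5 : 1 - 1/x = (x-1)/x := by field_simp
      linarith [h5 ▸ hlog]
  have hle := hmono (Set.mem_Icc.mpr ⟨le_refl 1, by linarith⟩) (Set.mem_Icc.mpr ⟨ht1, htB⟩) ht1
  have hg1 : g 1 = 0 := by simp [hg]
  have hgt : g t = t * Real.log t - t + 1 - (t-1)^2/(2*B) := rfl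
  rw [hg1, hgt] at hle
  linarith

lemma pt_lower {B t : ℝ} (hB : 2 ≤ B) (ht0 : 0 ≤ t) (htB : t ≤ B) :
    (t-1)^2/(2*B) ≤ t * Real.log t - t + 1 := by
  rcases le_total t 1 with h | h
  · have h1 := pt_lower_left ht0 h
    have h2 : (t-1)^2/(2*B) ≤ (t-1)^2/2 :=
      div_le_div_of_nonneg_left (sq_nonneg _) (by norm_num) (by linarith)
    linarith
  · exact pt_lower_right hB h htB

lemma pt_upper {B t : ℝ} (hB : 2 ≤ B) (ht0 : 0 ≤ t) (htB : t ≤ B) :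
    t * Real.log t - t + 1 ≤
      (B * Real.log B - B + 1)/(B-1) * ((|t-1| + (t-1))/2) + ((|t-1| - (t-1))/2) := by
  have hB1 : (1:ℝ) < B := by linarith
  have hB1' : B - 1 ≠ 0 := by linarith
  rcases le_total t 1 with h1 | h1
  · rw [abs_of_nonpos (by linarith : t - 1 ≤ 0)]
    have heq : (B * Real.log B - B + 1)/(B-1) * ((-(t-1) + (t-1))/2) + ((-(t-1)) - (t-1))/2
        = 1 - t := by ring
    rw [heq]
    have := Real.mul_log_nonpos ht0 h1
    linarith
  · rw [abs_of_nonneg (by linarith : 0 ≤ t - 1)]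
    have hchord : t * Real.log t ≤ (t-1) * (B * Real.log B)/(B-1) := by
      have ha0 : (0:ℝ) ≤ (B-t)/(B-1) := div_nonneg (by linarith) (by linarith)
      have hb0 : (0:ℝ) ≤ (t-1)/(B-1) := div_nonneg (by linarith) (by linarith)
      have hab : (B-t)/(B-1) + (t-1)/(B-1) = 1 := by
        field_simp
        ring
      have hcv := Real.convexOn_mul_log.2 (Set.mem_Ici.mpr (zero_le_one))
        (Set.mem_Ici.mpr (by linarith : (0:ℝ) ≤ B)) ha0 hb0 hab
      rw [smul_eq_mul, smul_eq_mul, smul_eq_mul, smul_eq_mul] at hcv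
      have e1 : (B-t)/(B-1) * 1 + (t-1)/(B-1) * B = t := by
        field_simp
        ring
      rw [e1] at hcv
      simp only [Real.log_one, mul_zero, mul_one, one_mul] at hcv
      calc t * Real.log t ≤ (t-1)/(B-1) * (B * Real.log B) := by linarith [hcv]
        _ = (t-1) * (B * Real.log B)/(B-1) := by ring
    have heq : (B * Real.log B - B + 1)/(B-1) * (((t-1) + (t-1))/2) + ((t-1) - (t-1))/2
        = (t-1) * (B * Real.log B)/(B-1) - (t-1) := by
      field_simp
      ring
    rw [heq]
    linarith

lemma gap_eq {n : ℕ} (hn : 2 ≤ n) (p : Fin n → ℝ) (hp0 : ∀ i, 0 ≤ p i)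
    (hp1 : ∑ i, p i = 1) :
    Real.log n + ∑ i, p i * Real.log (p i)
      = (1/(n:ℝ)) * ∑ i, (((n:ℝ) * p i) * Real.log ((n:ℝ) * p i) - ((n:ℝ) * p i - 1)) := by
  have hn2 : (2:ℝ) ≤ (n:ℝ) := by exact_mod_cast hn
  have hn0 : (0:ℝ) < (n:ℝ) := by linarith
  have key : ∀ i, ((n:ℝ) * p i) * Real.log ((n:ℝ) * p i) - ((n:ℝ) * p i - 1)
      = (n:ℝ) * (p i * Real.log (n:ℝ) + p i * Real.log (p i)) - ((n:ℝ) * p i - 1) := by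
    intro i
    rcases eq_or_lt_of_le (hp0 i) with h | h
    · rw [← h]; simp
    · rw [Real.log_mul (ne_of_gt hn0) (ne_of_gt h)]; ring
  rw [Finset.sum_congr rfl (fun i _ => key i)]
  rw [Finset.sum_sub_distrib, ← Finset.mul_sum]
  have h2 : ∑ i : Fin n, ((n:ℝ) * p i - 1) = 0 := by
    rw [Finset.sum_sub_distrib, ← Finset.mul_sum, hp1, mul_one, Finset.sum_const,
      Finset.card_univ, Fintype.card_fin, nsmul_eq_mul, mul_one, sub_self]
  rw [h2, sub_zero]
  have h3 : ∑ i, (p i * Real.log (n:ℝ) + p i * Real.log (p i))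
      = Real.log (n:ℝ) + ∑ i, p i * Real.log (p i) := by
    rw [Finset.sum_add_distrib, ← Finset.sum_mul, hp1, one_mul]
  rw [h3]
  field_simp

lemma gap_lower {n : ℕ} (hn : 2 ≤ n) (p : Fin n → ℝ) (hp0 : ∀ i, 0 ≤ p i)
    (hp1 : ∑ i, p i = 1) (hple : ∀ i, p i ≤ 1) :
    (1/2) * ∑ i, (p i - 1/(n:ℝ))^2 ≤ Real.log n + ∑ i, p i * Real.log (p i) := by
  have hn2 : (2:ℝ) ≤ (n:ℝ) := by exact_mod_cast hn
  have hn0 : (0:ℝ) < (n:ℝ) := by linarith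
  rw [gap_eq hn p hp0 hp1]
  have step1 : (1/2) * ∑ i, (p i - 1/(n:ℝ))^2
      = (1/(n:ℝ)) * ∑ i, ((n:ℝ) * p i - 1)^2 / (2*(n:ℝ)) := by
    rw [Finset.mul_sum, Finset.mul_sum]
    apply Finset.sum_congr rfl
    intro i _
    field_simp
  rw [step1]
  apply mul_le_mul_of_nonneg_left _ (by positivity : (0:ℝ) ≤ 1/(n:ℝ))
  apply Finset.sum_le_sum
  intro i _
  have hti0 : 0 ≤ (n:ℝ) * p i := mul_nonneg (le_of_lt hn0) (hp0 i)
  have htin : (n:ℝ) * p i ≤ (n:ℝ) := by nlinarith [hple i]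
  have := pt_lower hn2 hti0 htin
  linarith

lemma gap_upper {n : ℕ} (hn : 2 ≤ n) (p : Fin n → ℝ) (hp0 : ∀ i, 0 ≤ p i)
    (hp1 : ∑ i, p i = 1) (hple : ∀ i, p i ≤ 1) :
    Real.log n + ∑ i, p i * Real.log (p i)
      ≤ (Real.log n / (n:ℝ)) * ∑ i, |(n:ℝ) * p i - 1| := by
  have hn2 : (2:ℝ) ≤ (n:ℝ) := by exact_mod_cast hn
  have hn0 : (0:ℝ) < (n:ℝ) := by linarith
  have hlogn : 0 ≤ Real.log (n:ℝ) := Real.log_nonneg (by linarith)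
  set K : ℝ := ((n:ℝ) * Real.log (n:ℝ) - (n:ℝ) + 1)/((n:ℝ)-1) with hK
  have hsum_y : ∑ i : Fin n, ((n:ℝ) * p i - 1) = 0 := by
    rw [Finset.sum_sub_distrib, ← Finset.mul_sum, hp1, mul_one, Finset.sum_const,
      Finset.card_univ, Fintype.card_fin, nsmul_eq_mul, mul_one, sub_self]
  rw [gap_eq hn p hp0 hp1]
  have step1 : ∑ i, (((n:ℝ) * p i) * Real.log ((n:ℝ) * p i) - ((n:ℝ) * p i - 1))
      ≤ ∑ i, ((K+1)/2 * |(n:ℝ) * p i - 1| + (K-1)/2 * ((n:ℝ) * p i - 1)) := by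
    apply Finset.sum_le_sum
    intro i _
    have hti0 : 0 ≤ (n:ℝ) * p i := mul_nonneg (le_of_lt hn0) (hp0 i)
    have htin : (n:ℝ) * p i ≤ (n:ℝ) := by nlinarith [hple i]
    have h := pt_upper hn2 hti0 htin
    have heq : K * ((|(n:ℝ) * p i - 1| + ((n:ℝ) * p i - 1))/2)
        + ((|(n:ℝ) * p i - 1| - ((n:ℝ) * p i - 1))/2)
        = (K+1)/2 * |(n:ℝ) * p i - 1| + (K-1)/2 * ((n:ℝ) * p i - 1) := by ring
    rw [hK] at heq ⊢
    linarith [heq ▸ h]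
  have step2 : ∑ i, ((K+1)/2 * |(n:ℝ) * p i - 1| + (K-1)/2 * ((n:ℝ) * p i - 1))
      = (K+1)/2 * ∑ i, |(n:ℝ) * p i - 1| := by
    rw [Finset.sum_add_distrib, ← Finset.mul_sum, ← Finset.mul_sum, hsum_y, mul_zero, add_zero]
  have hKbound : (K+1)/2 ≤ Real.log n := by
    have h : K ≤ 2*Real.log n - 1 := by
      rw [hK, div_le_iff₀ (by linarith : (0:ℝ) < (n:ℝ)-1)]
      nlinarith [mul_nonneg (by linarith : (0:ℝ) ≤ (n:ℝ)-2) hlogn]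
    linarith
  have habs : 0 ≤ ∑ i, |(n:ℝ) * p i - 1| := Finset.sum_nonneg (fun i _ => abs_nonneg _)
  calc (1/(n:ℝ)) * ∑ i, (((n:ℝ) * p i) * Real.log ((n:ℝ) * p i) - ((n:ℝ) * p i - 1))
      ≤ (1/(n:ℝ)) * ((K+1)/2 * ∑ i, |(n:ℝ) * p i - 1|) := by
        apply mul_le_mul_of_nonneg_left _ (by positivity : (0:ℝ) ≤ 1/(n:ℝ))
        rw [← step2]
        exact step1
    _ ≤ (1/(n:ℝ)) * (Real.log n * ∑ i, |(n:ℝ) * p i - 1|) :=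
        mul_le_mul_of_nonneg_left (mul_le_mul_of_nonneg_right hKbound habs)
          (by positivity : (0:ℝ) ≤ 1/(n:ℝ))
    _ = (Real.log n / (n:ℝ)) * ∑ i, |(n:ℝ) * p i - 1| := by ring

set_option maxHeartbeats 1000000 in
lemma main_aux (C : ℕ) (hC : 2 ≤ C) (a : ℝ) (ha : 0 < a)
    (Du Dk E : Fin C → ℝ)
    (hDu0 : ∀ i, 0 ≤ Du i) (hDu1 : ∑ i, Du i = 1)
    (hDk0 : ∀ i, 0 ≤ Dk i) (hDk1 : ∑ i, Dk i = 1)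
    (hE0 : ∀ i, 0 ≤ E i) (hS1 : (∑ c, E c) ≤ 1)
    (pu pk : Fin C → ℝ)
    (hpu : ∀ i, pu i = (1 + a * (Du i * (∑ c, E c) - E i)) / (C:ℝ))
    (hpk : ∀ i, pk i = (1 + a * (Dk i * (∑ c, E c) - E i)) / (C:ℝ))
    (hpu0 : ∀ i, 0 ≤ pu i) (hpk0 : ∀ i, 0 ≤ pk i)
    (mu dl : ℝ) (hmu0 : 0 ≤ mu) (hdl0 : 0 ≤ dl)
    (hmu : ∀ i, |Du i - 1/(C:ℝ)| ≤ mu)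
    (hdl : ∀ i, |(∑ c, E c)/(C:ℝ) - E i| ≤ dl) :
    (-∑ i, pu i * Real.log (pu i)) - (-∑ i, pk i * Real.log (pk i)) ≥
      (1/2) * (a * (∑ c, E c) / (C:ℝ))^2 * (∑ i, (Dk i - 1/(C:ℝ))^2)
        - a * Real.log C * mu - (a^2/(C:ℝ)^2 + a * Real.log C) * dl := by
  have hN2 : (2:ℝ) ≤ (C:ℝ) := by exact_mod_cast hC
  have hN0 : (0:ℝ) < (C:ℝ) := by linarith
  have hNne : (C:ℝ) ≠ 0 := ne_of_gt hN0
  set S : ℝ := ∑ c, E c with hSdef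
  have hS0 : 0 ≤ S := Finset.sum_nonneg (fun i _ => hE0 i)
  -- sums of pu, pk are 1
  have hzero : ∀ (D : Fin C → ℝ), (∑ i, D i = 1) → ∑ i, a * (D i * S - E i) = 0 := by
    intro D hD
    rw [← Finset.mul_sum, Finset.sum_sub_distrib, ← Finset.sum_mul, hD, one_mul, ← hSdef,
      sub_self, mul_zero]
  have hsum : ∀ (D q : Fin C → ℝ), (∑ i, D i = 1) →
      (∀ i, q i = (1 + a * (D i * S - E i)) / (C:ℝ)) → ∑ i, q i = 1 := by
    intro D q hD hq
    rw [Finset.sum_congr rfl (fun i _ => hq i), ← Finset.sum_div, Finset.sum_add_distrib,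
      hzero D hD, add_zero, Finset.sum_const, Finset.card_univ, Fintype.card_fin,
      nsmul_eq_mul, mul_one, div_self hNne]
  have hsumpu : ∑ i, pu i = 1 := hsum Du pu hDu1 hpu
  have hsumpk : ∑ i, pk i = 1 := hsum Dk pk hDk1 hpk
  have hpule : ∀ i, pu i ≤ 1 := by
    intro i
    calc pu i ≤ ∑ j, pu j := Finset.single_le_sum (fun j _ => hpu0 j) (Finset.mem_univ i)
      _ = 1 := hsumpu
  have hpkle : ∀ i, pk i ≤ 1 := by
    intro i
    calc pk i ≤ ∑ j, pk j := Finset.single_le_sum (fun j _ => hpk0 j) (Finset.mem_univ i)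
      _ = 1 := hsumpk
  have glow := gap_lower hC pk hpk0 hsumpk hpkle
  have gup := gap_upper hC pu hpu0 hsumpu hpule
  have hlogN : 0 ≤ Real.log (C:ℝ) := Real.log_nonneg (by linarith)
  -- Bound 1 : the u-side
  have habs_u : ∀ i, |(C:ℝ) * pu i - 1| ≤ a * (S * mu + dl) := by
    intro i
    have h1 : (C:ℝ) * pu i - 1 = a * (S * (Du i - 1/(C:ℝ)) + (S/(C:ℝ) - E i)) := by
      rw [hpu i, mul_div_cancel₀ _ hNne]
      ring
    rw [h1, abs_mul, abs_of_pos ha]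
    apply mul_le_mul_of_nonneg_left _ (le_of_lt ha)
    calc |S * (Du i - 1/(C:ℝ)) + (S/(C:ℝ) - E i)|
        ≤ |S * (Du i - 1/(C:ℝ))| + |S/(C:ℝ) - E i| := abs_add_le _ _
      _ = S * |Du i - 1/(C:ℝ)| + |S/(C:ℝ) - E i| := by rw [abs_mul, abs_of_nonneg hS0]
      _ ≤ S * mu + dl := by
          have := hmu i
          have := hdl i
          nlinarith
  have hBu : (Real.log C / (C:ℝ)) * ∑ i, |(C:ℝ) * pu i - 1|
      ≤ a * Real.log C * mu + a * Real.log C * dl := by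
    have hsum_abs : ∑ i, |(C:ℝ) * pu i - 1| ≤ (C:ℝ) * (a * (S * mu + dl)) := by
      calc ∑ i, |(C:ℝ) * pu i - 1| ≤ ∑ _i : Fin C, a * (S * mu + dl) :=
            Finset.sum_le_sum (fun i _ => habs_u i)
        _ = (C:ℝ) * (a * (S * mu + dl)) := by
            rw [Finset.sum_const, Finset.card_univ, Fintype.card_fin, nsmul_eq_mul]
    calc (Real.log C / (C:ℝ)) * ∑ i, |(C:ℝ) * pu i - 1|
        ≤ (Real.log C / (C:ℝ)) * ((C:ℝ) * (a * (S * mu + dl))) := by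
          apply mul_le_mul_of_nonneg_left hsum_abs (by positivity)
      _ = a * Real.log C * (S * mu) + a * Real.log C * dl := by
          field_simp
      _ ≤ a * Real.log C * mu + a * Real.log C * dl := by
          have h6 : S * mu ≤ mu := by nlinarith
          have h5 : a * Real.log C * (S * mu) ≤ a * Real.log C * mu :=
            mul_le_mul_of_nonneg_left h6 (mul_nonneg ha.le hlogN)
          linarith
  -- Bound 2 : the k-side
  have hBk : (1/2) * (a * S / (C:ℝ))^2 * (∑ i, (Dk i - 1/(C:ℝ))^2) - (a^2/(C:ℝ)^2) * dl
      ≤ (1/2) * ∑ i, (pk i - 1/(C:ℝ))^2 := by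
    have hterm : ∀ i, (pk i - 1/(C:ℝ))^2
        = (a/(C:ℝ))^2 * (S * (Dk i - 1/(C:ℝ)) + (S/(C:ℝ) - E i))^2 := by
      intro i
      have h1 : pk i - 1/(C:ℝ) = (a/(C:ℝ)) * (S * (Dk i - 1/(C:ℝ)) + (S/(C:ℝ) - E i)) := by
        rw [hpk i]
        field_simp
        ring
      rw [h1, mul_pow]
    have hsum_e : ∑ i, (S/(C:ℝ) - E i) = 0 := by
      rw [Finset.sum_sub_distrib, Finset.sum_const, Finset.card_univ, Fintype.card_fin,
        nsmul_eq_mul, ← hSdef, mul_div_cancel₀ _ hNne, sub_self]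
    have hcross : ∑ i, (Dk i - 1/(C:ℝ)) * (S/(C:ℝ) - E i) ≥ -dl := by
      have h1 : ∑ i, (Dk i - 1/(C:ℝ)) * (S/(C:ℝ) - E i)
          = ∑ i, Dk i * (S/(C:ℝ) - E i) - (1/(C:ℝ)) * ∑ i, (S/(C:ℝ) - E i) := by
        rw [Finset.mul_sum, ← Finset.sum_sub_distrib]
        apply Finset.sum_congr rfl
        intro i _
        ring
      rw [h1, hsum_e, mul_zero, sub_zero]
      have h2 : ∀ i, -(Dk i * dl) ≤ Dk i * (S/(C:ℝ) - E i) := by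
        intro i
        have he : -dl ≤ S/(C:ℝ) - E i := neg_le_of_abs_le (hdl i)
        nlinarith [hDk0 i]
      calc -dl = -∑ i, Dk i * dl := by rw [← Finset.sum_mul, hDk1, one_mul]
        _ = ∑ i, -(Dk i * dl) := by rw [Finset.sum_neg_distrib]
        _ ≤ ∑ i, Dk i * (S/(C:ℝ) - E i) := Finset.sum_le_sum (fun i _ => h2 i)
    have hsum_sq : ∑ i, (pk i - 1/(C:ℝ))^2
        = (a/(C:ℝ))^2 * ∑ i, (S * (Dk i - 1/(C:ℝ)) + (S/(C:ℝ) - E i))^2 := by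
      rw [Finset.mul_sum]
      exact Finset.sum_congr rfl (fun i _ => hterm i)
    have hsq : ∀ i, S^2 * (Dk i - 1/(C:ℝ))^2
        + 2*S*((Dk i - 1/(C:ℝ)) * (S/(C:ℝ) - E i))
        ≤ (S * (Dk i - 1/(C:ℝ)) + (S/(C:ℝ) - E i))^2 := by
      intro i
      nlinarith [sq_nonneg (S/(C:ℝ) - E i)]
    have h4 : S^2 * (∑ i, (Dk i - 1/(C:ℝ))^2) - 2*dl
        ≤ ∑ i, (S * (Dk i - 1/(C:ℝ)) + (S/(C:ℝ) - E i))^2 := by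
      have hs1 := Finset.sum_le_sum (fun i (_ : i ∈ Finset.univ) => hsq i)
      rw [Finset.sum_add_distrib, ← Finset.mul_sum, ← Finset.mul_sum] at hs1
      have hx1 : 2*S*(-dl) ≤ 2*S*(∑ i, (Dk i - 1/(C:ℝ)) * (S/(C:ℝ) - E i)) :=
        mul_le_mul_of_nonneg_left hcross (by positivity)
      have hx2 : 2*S*dl ≤ 2*dl := by nlinarith
      linarith
    calc (1/2) * (a * S / (C:ℝ))^2 * (∑ i, (Dk i - 1/(C:ℝ))^2) - (a^2/(C:ℝ)^2) * dl
        = (1/2) * (a/(C:ℝ))^2 * (S^2 * (∑ i, (Dk i - 1/(C:ℝ))^2) - 2*dl) := by ring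
      _ ≤ (1/2) * (a/(C:ℝ))^2 * ∑ i, (S * (Dk i - 1/(C:ℝ)) + (S/(C:ℝ) - E i))^2 := by
          apply mul_le_mul_of_nonneg_left h4 (by positivity)
      _ = (1/2) * ∑ i, (pk i - 1/(C:ℝ))^2 := by rw [hsum_sq]; ring
  -- assemble
  have hexp : (a^2/(C:ℝ)^2 + a * Real.log C) * dl
      = (a^2/(C:ℝ)^2) * dl + a * Real.log C * dl := by ring
  have hkey : (-∑ i, pu i * Real.log (pu i)) - (-∑ i, pk i * Real.log (pk i))
      = (Real.log C + ∑ i, pk i * Real.log (pk i))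
        - (Real.log C + ∑ i, pu i * Real.log (pu i)) := by ring
  rw [ge_iff_le, hkey]
  linarith [glow, gup, hBu, hBk]

/-- Theorem 1 of the paper: Under the first-order approximation of the
tempered softmax, the heterogeneity estimate `Ĥ(D) = H(softmax(Δb, T))`, with expected
bias update `E[Δb_i] = ηR(D_i S − E_i)` and linearization
`softmax(Δb,T)_i ≈ (1 + ηR(D_i S − E_i)/T)/C`, satisfies for two clients `u, k`:
`Ĥ(D^u) − Ĥ(D^k) ≥ ½ (ηRS/(CT))² ‖D^k − U‖₂² − (ηR ln C / T) ‖D^u − U‖_∞ − 𝒞 δ`,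
where `𝒞 = ηR(ηR + C²T ln C)/(C²T²)` and `δ = max_i |S/C − E_i|`. -/
theorem heterogeneity_estimate_separation (C : ℕ) (hC : 2 ≤ C)
    (η R T : ℝ) (hη : 0 < η) (hR : 0 < R) (hT : 0 < T)
    (Du Dk : Fin C → ℝ)
    (hDu0 : ∀ i, 0 ≤ Du i) (hDu1 : ∑ i, Du i = 1)
    (hDk0 : ∀ i, 0 ≤ Dk i) (hDk1 : ∑ i, Dk i = 1)
    (E : Fin C → ℝ) (hE0 : ∀ i, 0 ≤ E i) (hE1 : ∀ i, E i ≤ 1)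
    (hS1 : (∑ c, E c) ≤ 1)
    -- linearized tempered softmax of the expected bias updates of the two clients
    (pu pk : Fin C → ℝ)
    (hpu : ∀ i, pu i = (1 + η * R * (Du i * (∑ c, E c) - E i) / T) / (C : ℝ))
    (hpk : ∀ i, pk i = (1 + η * R * (Dk i * (∑ c, E c) - E i) / T) / (C : ℝ))
    (hpu0 : ∀ i, 0 ≤ pu i) (hpk0 : ∀ i, 0 ≤ pk i) :
    (-∑ i, pu i * Real.log (pu i)) - (-∑ i, pk i * Real.log (pk i)) ≥
      (1 / 2) * ((η * R * (∑ c, E c)) / ((C : ℝ) * T)) ^ 2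
          * (∑ i, (Dk i - 1 / (C : ℝ)) ^ 2)
        - (η * R * Real.log C / T)
          * Finset.univ.sup' ⟨⟨0, by omega⟩, Finset.mem_univ _⟩
              (fun i => |Du i - 1 / (C : ℝ)|)
        - (η * R * (η * R + (C : ℝ) ^ 2 * T * Real.log C) / ((C : ℝ) ^ 2 * T ^ 2))
          * Finset.univ.sup' ⟨⟨0, by omega⟩, Finset.mem_univ _⟩
              (fun i => |(∑ c, E c) / (C : ℝ) - E i|) := by
  have hNne : (C:ℝ) ≠ 0 := Nat.cast_ne_zero.mpr (by omega)
  have hTne : T ≠ 0 := ne_of_gt hT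
  have key := main_aux C hC (η*R/T) (by positivity) Du Dk E hDu0 hDu1 hDk0 hDk1 hE0 hS1 pu pk
    (fun i => by rw [hpu i]; ring) (fun i => by rw [hpk i]; ring) hpu0 hpk0
    (Finset.univ.sup' ⟨⟨0, by omega⟩, Finset.mem_univ _⟩ (fun i => |Du i - 1/(C:ℝ)|))
    (Finset.univ.sup' ⟨⟨0, by omega⟩, Finset.mem_univ _⟩ (fun i => |(∑ c, E c)/(C:ℝ) - E i|))
    (le_trans (abs_nonneg _) (Finset.le_sup' (fun j => |Du j - 1/(C:ℝ)|) (Finset.mem_univ (⟨0, by omega⟩ : Fin C))))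
    (le_trans (abs_nonneg _) (Finset.le_sup' (fun j => |(∑ c, E c)/(C:ℝ) - E j|) (Finset.mem_univ (⟨0, by omega⟩ : Fin C))))
    (fun i => Finset.le_sup' (fun j => |Du j - 1/(C:ℝ)|) (Finset.mem_univ i))
    (fun i => Finset.le_sup' (fun j => |(∑ c, E c)/(C:ℝ) - E j|) (Finset.mem_univ i))
  have e1 : (η*R/T) * (∑ c, E c) / (C:ℝ) = η * R * (∑ c, E c) / ((C:ℝ)*T) := by
    rw [div_mul_eq_mul_div, div_div, mul_comm T (C:ℝ)]
  have e2 : (η*R/T) * Real.log C = η * R * Real.log C / T := by ring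
  have e3 : ((η*R/T)^2/(C:ℝ)^2 + (η*R/T) * Real.log C)
      = η * R * (η * R + (C:ℝ)^2 * T * Real.log C) / ((C:ℝ)^2 * T^2) := by
    field_simp
  rw [e1, e3, e2] at key
  exact key
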